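/- Let N_d ≥ 2 be an integer, let N_p = N_d − 1, and let i be a real number with cos i > N_p/N_d. Then the relative trajectory p in a prograde rotating frame is injective on [0,1); i.e., the relative trajectory is non-self-intersecting. -/

import Mathlib

open Real

/-- The relative trajectory in a prograde rotating frame: ascending node longitude
`Θ = -2π N_d τ`, argument of latitude `u = 2π N_p τ`, inclination `i`, unit radius. -/
noncomputable def progradeTrajectory (Nd Np : ℕ) (i : ℝ) (τ : ℝ) : ℝ × ℝ × ℝ :=
  let Θ : ℝ := -(2 * π * Nd * τ)
  let u : ℝ := 2 * π * Np * τ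
  (Real.cos Θ * Real.cos u - Real.sin Θ * Real.sin u * Real.cos i,
   Real.sin Θ * Real.cos u + Real.cos Θ * Real.sin u * Real.cos i,
   Real.sin u * Real.sin i)

/-- Trig identity for the first coordinate. -/
lemma aux_re (c Θ u : ℝ) :
    (1 + c) / 2 * Real.cos (Θ + u) + (1 - c) / 2 * Real.cos (Θ - u)
      = Real.cos Θ * Real.cos u - Real.sin Θ * Real.sin u * c := by
  rw [Real.cos_add, Real.cos_sub]; ring

/-- Trig identity for the second coordinate. -/
lemma aux_im (c Θ u : ℝ) :
    (1 + c) / 2 * Real.sin (Θ + u) + (1 - c) / 2 * Real.sin (Θ - u)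
      = Real.sin Θ * Real.cos u + Real.cos Θ * Real.sin u * c := by
  rw [Real.sin_add, Real.sin_sub]; ring

/-- Lipschitz-type bound for powers on the unit circle. -/
lemma abs_pow_sub_pow_le' (x y : ℂ) (hx : ‖x‖ = 1) (hy : ‖y‖ = 1)
    (n : ℕ) : ‖x ^ n - y ^ n‖ ≤ n * ‖x - y‖ := by
  have h := geom_sum₂_mul x y n
  calc ‖x ^ n - y ^ n‖
      = ‖(∑ i ∈ Finset.range n, x ^ i * y ^ (n - 1 - i)) * (x - y)‖ := by rw [h]
    _ = ‖∑ i ∈ Finset.range n, x ^ i * y ^ (n - 1 - i)‖ * ‖x - y‖ := by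
        rw [norm_mul]
    _ ≤ n * ‖x - y‖ := by
        apply mul_le_mul_of_nonneg_right _ (norm_nonneg _)
        calc ‖∑ i ∈ Finset.range n, x ^ i * y ^ (n - 1 - i)‖
            ≤ ∑ i ∈ Finset.range n, ‖x ^ i * y ^ (n - 1 - i)‖ :=
              norm_sum_le _ _
          _ = ∑ i ∈ Finset.range n, 1 := by
              apply Finset.sum_congr rfl
              intro i _
              rw [norm_mul, norm_pow, norm_pow, hx, hy, one_pow, one_pow, one_mul]
          _ = n := by simp

theorem prograde_injOn_of_cos_gt (Nd Np : ℕ) (hNd : 2 ≤ Nd) (hNp : Np = Nd - 1)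
    (i : ℝ) (hi : (Np : ℝ) / Nd < Real.cos i) :
    Set.InjOn (progradeTrajectory Nd Np i) (Set.Ico 0 1) := by
  intro τ₁ hτ₁ τ₂ hτ₂ hp
  set c := Real.cos i with hcdef
  have hNdpos : (0:ℝ) < Nd := by positivity
  have hNpcast : (Np:ℝ) = (Nd:ℝ) - 1 := by
    subst hNp
    rw [Nat.cast_sub (by omega : 1 ≤ Nd)]; norm_num
  have hmcast : ((2 * Nd - 1 : ℕ) : ℝ) = 2 * (Nd:ℝ) - 1 := by
    rw [Nat.cast_sub (by omega : 1 ≤ 2 * Nd)]; push_cast; ring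
  set m : ℕ := 2 * Nd - 1 with hm
  have hkey : (Np:ℝ) < c * Nd := (div_lt_iff₀ hNdpos).mp hi
  have hc1 : |c| ≤ 1 := Real.abs_cos_le_one i
  have hA : (0:ℝ) ≤ (1 + c) / 2 := by
    have := abs_le.mp hc1; linarith [this.1]
  have hB : (0:ℝ) ≤ (1 - c) / 2 := by
    have := abs_le.mp hc1; linarith [this.2]
  -- the complex function z
  set z : ℝ → ℂ := fun τ => Complex.exp ((↑(-(2 * π * τ)) : ℂ) * Complex.I) with hzdef
  have hzabs : ∀ τ, ‖z τ‖ = 1 := fun τ => Complex.norm_exp_ofReal_mul_I _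
  have hzre : ∀ τ, (z τ).re = Real.cos (-(2 * π * τ)) := fun τ =>
    Complex.exp_ofReal_mul_I_re _
  have hzim : ∀ τ, (z τ).im = Real.sin (-(2 * π * τ)) := fun τ =>
    Complex.exp_ofReal_mul_I_im _
  have hzpow : ∀ τ, (z τ) ^ m = Complex.exp ((↑((m : ℝ) * -(2 * π * τ)) : ℂ) * Complex.I) := by
    intro τ
    rw [hzdef]
    rw [← Complex.exp_nat_mul]
    congr 1
    push_cast
    ring
  -- angle identities
  have hang1 : ∀ τ : ℝ, -(2 * π * τ) = -(2 * π * Nd * τ) + 2 * π * Np * τ := by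
    intro τ; rw [hNpcast]; ring
  have hang2 : ∀ τ : ℝ, (m : ℝ) * -(2 * π * τ) = -(2 * π * Nd * τ) - 2 * π * Np * τ := by
    intro τ; rw [hm, hmcast, hNpcast]; ring
  -- the complex form of the xy-projection
  have hform : ∀ τ, ((((1 + c) / 2 : ℝ)) : ℂ) * z τ + (((1 - c) / 2 : ℝ) : ℂ) * (z τ) ^ m
      = Complex.ofReal (progradeTrajectory Nd Np i τ).1
        + Complex.ofReal (progradeTrajectory Nd Np i τ).2.1 * Complex.I := by
    intro τ
    rw [hzpow]
    apply Complex.ext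
    · simp only [Complex.add_re, Complex.mul_re, Complex.ofReal_re, Complex.ofReal_im,
        Complex.exp_ofReal_mul_I_re, Complex.exp_ofReal_mul_I_im, Complex.mul_im,
        Complex.I_re, Complex.I_im]
      simp only [progradeTrajectory]
      rw [hzre τ, hang2 τ, hang1 τ, ← hcdef]
      have := aux_re c (-(2 * π * Nd * τ)) (2 * π * Np * τ)
      linarith [this]
    · simp only [Complex.add_im, Complex.mul_im, Complex.mul_re, Complex.ofReal_re,
        Complex.ofReal_im, Complex.exp_ofReal_mul_I_re, Complex.exp_ofReal_mul_I_im,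
        Complex.I_re, Complex.I_im]
      simp only [progradeTrajectory]
      rw [hzim τ, hang2 τ, hang1 τ, ← hcdef]
      have := aux_im c (-(2 * π * Nd * τ)) (2 * π * Np * τ)
      linarith [this]
  -- equality of complex values
  have hC : (((1 + c) / 2 : ℝ) : ℂ) * z τ₁ + (((1 - c) / 2 : ℝ) : ℂ) * (z τ₁) ^ m
      = (((1 + c) / 2 : ℝ) : ℂ) * z τ₂ + (((1 - c) / 2 : ℝ) : ℂ) * (z τ₂) ^ m := by
    rw [hform, hform, hp]
  have hdiff : (((1 + c) / 2 : ℝ) : ℂ) * (z τ₁ - z τ₂)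
      = (((1 - c) / 2 : ℝ) : ℂ) * ((z τ₂) ^ m - (z τ₁) ^ m) := by
    linear_combination hC
  -- take norms
  have habs : (1 + c) / 2 * ‖z τ₁ - z τ₂‖
      = (1 - c) / 2 * ‖(z τ₂) ^ m - (z τ₁) ^ m‖ := by
    have := congrArg norm hdiff
    rwa [norm_mul, norm_mul, Complex.norm_real, Complex.norm_real,
      Real.norm_of_nonneg hA, Real.norm_of_nonneg hB] at this
  have hbound : ‖(z τ₂) ^ m - (z τ₁) ^ m‖
      ≤ m * ‖z τ₂ - z τ₁‖ :=
    abs_pow_sub_pow_le' _ _ (hzabs τ₂) (hzabs τ₁) m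
  have hsym : ‖z τ₂ - z τ₁‖ = ‖z τ₁ - z τ₂‖ := by
    exact norm_sub_rev _ _
  -- conclude z τ₁ = z τ₂
  have hzeq : z τ₁ = z τ₂ := by
    by_contra hne
    have hd : 0 < ‖z τ₁ - z τ₂‖ := by
      exact norm_pos_iff.mpr (sub_ne_zero_of_ne hne)
    have h1 : (1 + c) / 2 * ‖z τ₁ - z τ₂‖
        ≤ (1 - c) / 2 * (m * ‖z τ₁ - z τ₂‖) := by
      rw [habs]
      rw [hsym] at hbound
      exact mul_le_mul_of_nonneg_left hbound hB
    have hcoef : (1 + c) / 2 ≤ (1 - c) / 2 * m := by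
      by_contra hlt
      push_neg at hlt
      nlinarith [hd]
    rw [hmcast] at hcoef
    nlinarith [hkey, hNpcast]
  -- from z τ₁ = z τ₂ conclude τ₁ = τ₂
  rw [hzdef] at hzeq
  simp only at hzeq
  rw [Complex.exp_eq_exp_iff_exists_int] at hzeq
  obtain ⟨n, hn⟩ := hzeq
  have hn' : (↑(-(2 * π * τ₁)) : ℂ) * Complex.I
      = (↑(-(2 * π * τ₂) + (n : ℝ) * (2 * π)) : ℂ) * Complex.I := by
    rw [hn]; push_cast; ring
  have him : -(2 * π * τ₁) = -(2 * π * τ₂) + (n : ℝ) * (2 * π) :=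
    Complex.ofReal_inj.mp (mul_right_cancel₀ Complex.I_ne_zero hn')
  have hπ : (0:ℝ) < π := Real.pi_pos
  have hτeq : τ₂ - τ₁ = (n : ℝ) := by
    have h2 : 2 * π * (τ₂ - τ₁) = 2 * π * (n : ℝ) := by linarith
    exact mul_left_cancel₀ (by positivity : (2 * π : ℝ) ≠ 0) h2
  obtain ⟨h10, h11⟩ := hτ₁
  obtain ⟨h20, h21⟩ := hτ₂
  have hn0 : n = 0 := by
    have habsn : |(n:ℝ)| < 1 := by rw [← hτeq, abs_lt]; constructor <;> linarith
    have h1n : |n| < 1 := by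
      rwa [← Int.cast_abs, show ((1:ℝ)) = ((1:ℤ):ℝ) by norm_cast, Int.cast_lt] at habsn
    exact Int.abs_lt_one_iff.mp h1n
  rw [hn0] at hτeq
  simp only [Int.cast_zero] at hτeq
  linarith
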